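/- Let (u,v) ∈ ℂ² be nonzero, let q = u + v·j be the corresponding quaternion, and set N = |u|² + |v|². Then q⁻¹ · i · q is the quaternion with components (0, (|u|²−|v|²)/N, −2·Im(conj(u)·v)/N, 2·Re(conj(u)·v)/N), i.e. q⁻¹ i q = ((|u|²−|v|²)·i − 2 Im(ūv)·j + 2 Re(ūv)·k) / (|u|²+|v|²). -/

import Mathlib

/-- The quaternion `u + v·j` attached to a pair `(u,v) ∈ ℂ²`, with components
`(Re u, Im u, Re v, Im v)` in the basis `(1, i, j, k)`. -/
def toQuat (u v : ℂ) : Quaternion ℝ := ⟨u.re, u.im, v.re, v.im⟩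

/-- The quaternion `i`, with components `(0,1,0,0)`. -/
def qi : Quaternion ℝ := ⟨0, 1, 0, 0⟩

/-- The quaternion with components `(r, x, y, z)` in the basis `(1, i, j, k)`. -/
def mkQ (r x y z : ℝ) : Quaternion ℝ := ⟨r, x, y, z⟩

/-- for nonzero `(u,v) ∈ ℂ²`, `q = u+v·j` and `N = |u|²+|v|²`, the
conjugate `q⁻¹·i·q` has components `(0, (|u|²−|v|²)/N, −2 Im(ūv)/N, 2 Re(ūv)/N)`. -/
theorem stmt6 (u v : ℂ) (h : (u, v) ≠ (0, 0)) (N : ℝ)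
    (hN : N = Complex.normSq u + Complex.normSq v) :
    (toQuat u v)⁻¹ * qi * toQuat u v =
      mkQ 0 ((Complex.normSq u - Complex.normSq v) / N)
        (-(2 * (star u * v).im) / N) (2 * (star u * v).re / N) := 
by
  have huv : u ≠ 0 ∨ v ≠ 0 := by
    by_contra hc
    push_neg at hc
    exact h (by simp [hc.1, hc.2])
  have hN0 : 0 < N := by
    rw [hN]
    rcases huv with h1 | h1
    · have := Complex.normSq_pos.2 h1
      have := Complex.normSq_nonneg v
      linarith
    · have := Complex.normSq_pos.2 h1
      have := Complex.normSq_nonneg u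
      linarith
  have hns : Quaternion.normSq (toQuat u v) = N := by
    rw [hN]
    rw [Quaternion.normSq_def']
    simp [toQuat, Quaternion.normSq_def', Complex.normSq_apply]
    ring
  rw [Quaternion.inv_def, hns]
  ext <;>
    simp only [Quaternion.re_mul, Quaternion.imI_mul, Quaternion.imJ_mul, Quaternion.imK_mul,
      Quaternion.re_smul, Quaternion.imI_smul, Quaternion.imJ_smul, Quaternion.imK_smul,
      Quaternion.re_star, Quaternion.imI_star, Quaternion.imJ_star, Quaternion.imK_star] <;>
    simp [toQuat, qi, mkQ, Quaternion.re_mul, Quaternion.imI_mul, Quaternion.imJ_mul,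
      Quaternion.imK_mul, Complex.normSq_apply, Complex.mul_re, Complex.mul_im, hN] <;>
    first | (right; ring) | (field_simp; ring)
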